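/- Let A{_τ×_σ}B be a smash biproduct bialgebra with σ right conormal. Then for all a,a'∈A and b∈B: Σ b_τ ⊗ (aa')_τ = Σ 1_{Bτ₁}b_{τ₂} ⊗ a_{τ₁}a'_{τ₂}, where on the left τ is applied to aa'⊗b, and on the right τ₁ is applied to a⊗1_B and τ₂ to a'⊗b. -/

import Mathlib

open TensorProduct

noncomputable section

variable (k : Type*) [Field k]

/-- Componentwise multiplication on `H ⊗ H` induced by a multiplication map `m` on `H`. -/
def mul2 (H : Type*) [AddCommGroup H] [Module k H] (m : H ⊗[k] H →ₗ[k] H) :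
    (H ⊗[k] H) ⊗[k] (H ⊗[k] H) →ₗ[k] H ⊗[k] H :=
  (TensorProduct.map m m) ∘ₗ (TensorProduct.tensorTensorTensorComm k H H H H).toLinearMap

/-- Componentwise multiplication on `H ⊗ (H ⊗ H)`. -/
def mul3 (H : Type*) [AddCommGroup H] [Module k H] (m : H ⊗[k] H →ₗ[k] H) :
    (H ⊗[k] (H ⊗[k] H)) ⊗[k] (H ⊗[k] (H ⊗[k] H)) →ₗ[k] H ⊗[k] (H ⊗[k] H) :=
  (TensorProduct.map m (mul2 k H m)) ∘ₗ
    (TensorProduct.tensorTensorTensorComm k H (H ⊗[k] H) H (H ⊗[k] H)).toLinearMap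

/-- `R ∈ H ⊗ H` is a quasitriangular structure with respect to the bialgebra
structure data `(m, Δ, e, ε)` on `H`:
(QT1) `(ε⊗id)(R) = e = (id⊗ε)(R)`, (QT2) `(Δ⊗id)(R) = R₁₃R₂₃`,
(QT3) `(id⊗Δ)(R) = R₁₃R₁₂`, (QT4) `RΔ(h) = Δᶜᵒᵖ(h)R`. -/
def IsQT (H : Type*) [AddCommGroup H] [Module k H]
    (m : H ⊗[k] H →ₗ[k] H) (Δ : H →ₗ[k] H ⊗[k] H) (e : H) (ε : H →ₗ[k] k)
    (R : H ⊗[k] H) : Prop :=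
  (TensorProduct.lid k H) ((LinearMap.rTensor H ε) R) = e ∧
  (TensorProduct.rid k H) ((LinearMap.lTensor H ε) R) = e ∧
  (TensorProduct.assoc k H H H).toLinearMap ((LinearMap.rTensor H Δ) R) =
    mul3 k H m (((LinearMap.lTensor H (TensorProduct.mk k H H e)) R) ⊗ₜ[k] (e ⊗ₜ[k] R)) ∧
  (LinearMap.lTensor H Δ) R =
    mul3 k H m (((LinearMap.lTensor H (TensorProduct.mk k H H e)) R) ⊗ₜ[k]
      ((LinearMap.lTensor H ((TensorProduct.mk k H H).flip e)) R)) ∧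
  ∀ h : H, mul2 k H m (R ⊗ₜ[k] Δ h) =
    mul2 k H m ((TensorProduct.comm k H H (Δ h)) ⊗ₜ[k] R)

variable (A B : Type*)
  [Ring A] [Algebra k A] [Coalgebra k A]
  [Ring B] [Algebra k B] [Coalgebra k B]

variable (σ : B ⊗[k] A →ₗ[k] A ⊗[k] B) (τ : A ⊗[k] B →ₗ[k] B ⊗[k] A)

/-- The smash product multiplication `(a⊗b)(a'⊗b') = Σ aa'_σ ⊗ b_σ b'` on `A ⊗ B`. -/
def smashMul : (A ⊗[k] B) ⊗[k] (A ⊗[k] B) →ₗ[k] A ⊗[k] B :=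
  (TensorProduct.map (LinearMap.mul' k A) (LinearMap.mul' k B))
    ∘ₗ (TensorProduct.assoc k A A (B ⊗[k] B)).symm.toLinearMap
    ∘ₗ (TensorProduct.map LinearMap.id
         ((TensorProduct.assoc k A B B).toLinearMap
           ∘ₗ (TensorProduct.map σ LinearMap.id)
           ∘ₗ (TensorProduct.assoc k B A B).symm.toLinearMap))
    ∘ₗ (TensorProduct.assoc k A B (A ⊗[k] B)).toLinearMap

/-- The smash coproduct comultiplication `Δ(a⊗b) = Σ a₍₁₎ ⊗ b₍₁₎τ ⊗ a₍₂₎τ ⊗ b₍₂₎` on `A ⊗ B`. -/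
def smashComul : A ⊗[k] B →ₗ[k] (A ⊗[k] B) ⊗[k] (A ⊗[k] B) :=
  (TensorProduct.assoc k A B (A ⊗[k] B)).symm.toLinearMap
    ∘ₗ (TensorProduct.map LinearMap.id
         ((TensorProduct.assoc k B A B).toLinearMap
           ∘ₗ (TensorProduct.map τ LinearMap.id)
           ∘ₗ (TensorProduct.assoc k A B B).symm.toLinearMap))
    ∘ₗ (TensorProduct.assoc k A A (B ⊗[k] B)).toLinearMap
    ∘ₗ (TensorProduct.map (Coalgebra.comul : A →ₗ[k] A ⊗[k] A)
          (Coalgebra.comul : B →ₗ[k] B ⊗[k] B))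

/-- The counit `ε_A ⊗ ε_B` of `A ⊗ B`. -/
def smashCounit : A ⊗[k] B →ₗ[k] k :=
  (LinearMap.mul' k k) ∘ₗ
    TensorProduct.map (Coalgebra.counit : A →ₗ[k] k) (Coalgebra.counit : B →ₗ[k] k)

/-- The projection `π_A = id_A ⊗ ε_B`. -/
def piA : A ⊗[k] B →ₗ[k] A :=
  (TensorProduct.rid k A).toLinearMap ∘ₗ LinearMap.lTensor A (Coalgebra.counit : B →ₗ[k] k)

/-- The projection `π_B = ε_A ⊗ id_B`. -/
def piB : A ⊗[k] B →ₗ[k] B :=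
  (TensorProduct.lid k B).toLinearMap ∘ₗ LinearMap.rTensor B (Coalgebra.counit : A →ₗ[k] k)

/-- `A {_τ×_σ} B` is a smash biproduct bialgebra. -/
structure IsSmashBiproduct : Prop where
  mul_assoc : ∀ x y z : A ⊗[k] B,
    smashMul k A B σ ((smashMul k A B σ (x ⊗ₜ[k] y)) ⊗ₜ[k] z)
      = smashMul k A B σ (x ⊗ₜ[k] (smashMul k A B σ (y ⊗ₜ[k] z)))
  one_mul : ∀ x : A ⊗[k] B, smashMul k A B σ (((1:A) ⊗ₜ[k] (1:B)) ⊗ₜ[k] x) = x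
  mul_one : ∀ x : A ⊗[k] B, smashMul k A B σ (x ⊗ₜ[k] ((1:A) ⊗ₜ[k] (1:B))) = x
  sigma_one_left : ∀ b : B, σ (b ⊗ₜ[k] (1:A)) = (1:A) ⊗ₜ[k] b
  sigma_one_right : ∀ a : A, σ ((1:B) ⊗ₜ[k] a) = a ⊗ₜ[k] (1:B)
  comul_coassoc : ∀ x : A ⊗[k] B,
    (TensorProduct.assoc k (A ⊗[k] B) (A ⊗[k] B) (A ⊗[k] B)).toLinearMap
        ((LinearMap.rTensor (A ⊗[k] B) (smashComul k A B τ)) (smashComul k A B τ x))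
      = (LinearMap.lTensor (A ⊗[k] B) (smashComul k A B τ)) (smashComul k A B τ x)
  counit_comul : ∀ x : A ⊗[k] B,
    (TensorProduct.lid k (A ⊗[k] B))
        ((LinearMap.rTensor (A ⊗[k] B) (smashCounit k A B)) (smashComul k A B τ x)) = x
  comul_counit : ∀ x : A ⊗[k] B,
    (TensorProduct.rid k (A ⊗[k] B))
        ((LinearMap.lTensor (A ⊗[k] B) (smashCounit k A B)) (smashComul k A B τ x)) = x
  tau_counit_left : ∀ (a : A) (b : B),
    (TensorProduct.lid k A)
        ((LinearMap.rTensor A (Coalgebra.counit : B →ₗ[k] k)) (τ (a ⊗ₜ[k] b)))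
      = (Coalgebra.counit : B →ₗ[k] k) b • a
  tau_counit_right : ∀ (a : A) (b : B),
    (TensorProduct.rid k B)
        ((LinearMap.lTensor B (Coalgebra.counit : A →ₗ[k] k)) (τ (a ⊗ₜ[k] b)))
      = (Coalgebra.counit : A →ₗ[k] k) a • b
  comul_mul : ∀ x y : A ⊗[k] B,
    smashComul k A B τ (smashMul k A B σ (x ⊗ₜ[k] y))
      = mul2 k (A ⊗[k] B) (smashMul k A B σ)
          ((smashComul k A B τ x) ⊗ₜ[k] (smashComul k A B τ y))
  comul_one : smashComul k A B τ ((1:A) ⊗ₜ[k] (1:B))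
      = ((1:A) ⊗ₜ[k] (1:B)) ⊗ₜ[k] ((1:A) ⊗ₜ[k] (1:B))
  counit_mul : ∀ x y : A ⊗[k] B,
    smashCounit k A B (smashMul k A B σ (x ⊗ₜ[k] y)) = smashCounit k A B x * smashCounit k A B y
  counit_one : smashCounit k A B ((1:A) ⊗ₜ[k] (1:B)) = 1

/-- `σ` is right conormal: `(ε_A ⊗ id_B) ∘ σ = id_B ⊗ ε_A`. -/
def RightConormal : Prop := ∀ (b : B) (a : A),
  (TensorProduct.lid k B)
      ((LinearMap.rTensor B (Coalgebra.counit : A →ₗ[k] k)) (σ (b ⊗ₜ[k] a)))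
    = (Coalgebra.counit : A →ₗ[k] k) a • b

/-- `σ` is left conormal: `(id_A ⊗ ε_B) ∘ σ = ε_B ⊗ id_A`. -/
def LeftConormal : Prop := ∀ (b : B) (a : A),
  (TensorProduct.rid k A)
      ((LinearMap.lTensor A (Coalgebra.counit : B →ₗ[k] k)) (σ (b ⊗ₜ[k] a)))
    = (Coalgebra.counit : B →ₗ[k] k) b • a

/-- `τ` is left normal: `τ(a ⊗ 1_B) = 1_B ⊗ a`. -/
def LeftNormal : Prop := ∀ a : A, τ (a ⊗ₜ[k] (1:B)) = (1:B) ⊗ₜ[k] a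

/-- `τ` is right normal: `τ(1_A ⊗ b) = b ⊗ 1_A`. -/
def RightNormal : Prop := ∀ b : B, τ ((1:A) ⊗ₜ[k] b) = b ⊗ₜ[k] (1:A)

set_option synthInstance.maxHeartbeats 1000000
set_option maxHeartbeats 1000000
open Coalgebra in
lemma smashMul_tmul (a a' : A) (b b' : B) :
    smashMul k A B σ ((a ⊗ₜ[k] b) ⊗ₜ[k] (a' ⊗ₜ[k] b')) =
      TensorProduct.map (LinearMap.mulLeft k a) (LinearMap.mulRight k b') (σ (b ⊗ₜ[k] a')) := by
  have h : ∀ t : A ⊗[k] B,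
      (TensorProduct.map (LinearMap.mul' k A) (LinearMap.mul' k B))
        ((TensorProduct.assoc k A A (B ⊗[k] B)).symm
          (a ⊗ₜ[k] ((TensorProduct.assoc k A B B) (t ⊗ₜ[k] b')))) =
      TensorProduct.map (LinearMap.mulLeft k a) (LinearMap.mulRight k b') t := by
    intro t
    induction t using TensorProduct.induction_on with
    | zero => simp
    | tmul x y => simp [LinearMap.mul'_apply]
    | add x y hx hy =>
        simp only [TensorProduct.add_tmul, TensorProduct.tmul_add, map_add, hx, hy]
  simp only [smashMul, LinearMap.coe_comp, Function.comp_apply, LinearEquiv.coe_coe,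
    TensorProduct.assoc_tmul, TensorProduct.map_tmul, LinearMap.id_coe, id_eq,
    TensorProduct.assoc_symm_tmul]
  exact h _

lemma smashMul_one_left (hsb : IsSmashBiproduct k A B σ τ) (a a' : A) (b' : B) :
    smashMul k A B σ ((a ⊗ₜ[k] (1:B)) ⊗ₜ[k] (a' ⊗ₜ[k] b')) = (a * a') ⊗ₜ[k] b' := by
  rw [smashMul_tmul, hsb.sigma_one_right]
  simp [LinearMap.mulLeft_apply, LinearMap.mulRight_apply]

lemma smashComul_tmul {ια ιβ : Type*} (a : A) (b : B) (ra : Coalgebra.Repr k a ια)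
    (rb : Coalgebra.Repr k b ιβ) :
    smashComul k A B τ (a ⊗ₜ[k] b) =
      ∑ i ∈ ra.index, ∑ j ∈ rb.index,
        TensorProduct.map (TensorProduct.mk k A B (ra.left i))
          ((TensorProduct.mk k A B).flip (rb.right j))
          (τ (ra.right i ⊗ₜ[k] rb.left j)) := by
  have h : ∀ (x : A) (d : B) (t : B ⊗[k] A),
      (TensorProduct.assoc k A B (A ⊗[k] B)).symm
          (x ⊗ₜ[k] ((TensorProduct.assoc k B A B) (t ⊗ₜ[k] d)))
        = TensorProduct.map (TensorProduct.mk k A B x)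
            ((TensorProduct.mk k A B).flip d) t := by
    intro x d t
    induction t using TensorProduct.induction_on with
    | zero => simp
    | tmul β α => simp
    | add s s' hs hs' =>
        simp only [TensorProduct.add_tmul, TensorProduct.tmul_add, map_add, hs, hs']
  simp only [smashComul, LinearMap.coe_comp, Function.comp_apply, LinearEquiv.coe_coe,
    TensorProduct.map_tmul]
  rw [← ra.eq, ← rb.eq]
  rw [TensorProduct.sum_tmul]
  simp only [TensorProduct.tmul_sum, map_sum, TensorProduct.assoc_tmul,
    TensorProduct.map_tmul, LinearMap.id_coe, id_eq, TensorProduct.assoc_symm_tmul]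
  exact Finset.sum_congr rfl fun i _ => Finset.sum_congr rfl fun j _ => h _ _ _

lemma piA_tmul (a : A) (b : B) :
    piA k A B (a ⊗ₜ[k] b) = (Coalgebra.counit : B →ₗ[k] k) b • a := by
  simp [piA]

lemma piB_tmul (a : A) (b : B) :
    piB k A B (a ⊗ₜ[k] b) = (Coalgebra.counit : A →ₗ[k] k) a • b := by
  simp [piB]

/-- `F ∘ Γ(x,·,d) = (ε_A x * ε_B d) • id`. -/
lemma F_term (x : A) (d : B) (t : B ⊗[k] A) :
    TensorProduct.map (piB k A B) (piA k A B)
        (TensorProduct.map (TensorProduct.mk k A B x)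
          ((TensorProduct.mk k A B).flip d) t)
      = ((Coalgebra.counit : A →ₗ[k] k) x * (Coalgebra.counit : B →ₗ[k] k) d) • t := by
  induction t using TensorProduct.induction_on with
  | zero => simp
  | tmul β α =>
      simp only [TensorProduct.map_tmul, TensorProduct.mk_apply, LinearMap.flip_apply,
        piB_tmul, piA_tmul, TensorProduct.smul_tmul', TensorProduct.tmul_smul, smul_smul, mul_comm]
  | add s s' hs hs' => simp only [map_add, smul_add, hs, hs']

lemma repr_counit_smul_right {ι : Type*} {a : A} (r : Coalgebra.Repr k a ι) :
    ∑ i ∈ r.index, (Coalgebra.counit : A →ₗ[k] k) (r.left i) • r.right i = a := by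
  have h := congrArg (TensorProduct.lid k A) (Coalgebra.sum_counit_tmul_eq (R := k) r)
  rw [map_sum] at h
  simp only [TensorProduct.lid_tmul, one_smul] at h
  exact h

lemma repr_counit_smul_left {ι : Type*} {a : A} (r : Coalgebra.Repr k a ι) :
    ∑ i ∈ r.index, (Coalgebra.counit : A →ₗ[k] k) (r.right i) • r.left i = a := by
  have h := congrArg (TensorProduct.rid k A) (Coalgebra.sum_tmul_counit_eq (R := k) r)
  rw [map_sum] at h
  simp only [TensorProduct.rid_tmul, one_smul] at h
  exact h

lemma counit_one_mul (hsb : IsSmashBiproduct k A B σ τ) :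
    (Coalgebra.counit : A →ₗ[k] k) (1:A) * (Coalgebra.counit : B →ₗ[k] k) (1:B) = 1 := by
  have := hsb.counit_one
  simpa [smashCounit, LinearMap.mul'_apply] using this

lemma counitB_one_ne_zero (hsb : IsSmashBiproduct k A B σ τ) :
    (Coalgebra.counit : B →ₗ[k] k) (1:B) ≠ 0 := by
  intro h0
  have := counit_one_mul k A B σ τ hsb
  rw [h0, mul_zero] at this
  exact zero_ne_one this

lemma counitA_one_ne_zero (hsb : IsSmashBiproduct k A B σ τ) :
    (Coalgebra.counit : A →ₗ[k] k) (1:A) ≠ 0 := by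
  intro h0
  have := counit_one_mul k A B σ τ hsb
  rw [h0, zero_mul] at this
  exact zero_ne_one this

lemma counitA_mul (hsb : IsSmashBiproduct k A B σ τ) (a a' : A) :
    (Coalgebra.counit : A →ₗ[k] k) (a * a')
      = (Coalgebra.counit : B →ₗ[k] k) (1:B) *
        ((Coalgebra.counit : A →ₗ[k] k) a * (Coalgebra.counit : A →ₗ[k] k) a') := by
  have h := hsb.counit_mul (a ⊗ₜ[k] (1:B)) (a' ⊗ₜ[k] (1:B))
  rw [smashMul_one_left k A B σ τ hsb] at h
  simp only [smashCounit, LinearMap.coe_comp, Function.comp_apply, TensorProduct.map_tmul,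
    LinearMap.mul'_apply] at h
  refine mul_right_cancel₀ (counitB_one_ne_zero k A B σ τ hsb) ?_
  rw [h]; ring

lemma sum_smul_tau_one {ι : Type*} (a : A) (ra : Coalgebra.Repr k a ι) (c : B) :
    ∑ i ∈ ra.index,
        (Coalgebra.counit : A →ₗ[k] k) (ra.left i) • τ (ra.right i ⊗ₜ[k] c)
      = τ (a ⊗ₜ[k] c) := by
  have h : ∀ i, (Coalgebra.counit : A →ₗ[k] k) (ra.left i) • τ (ra.right i ⊗ₜ[k] c)
      = τ (((Coalgebra.counit : A →ₗ[k] k) (ra.left i) • ra.right i) ⊗ₜ[k] c) := by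
    intro i; rw [← map_smul, TensorProduct.smul_tmul']
  rw [Finset.sum_congr rfl fun i _ => h i, ← map_sum, ← TensorProduct.sum_tmul,
    repr_counit_smul_right]

lemma sum_smul_tau {ια ιβ : Type*} (a : A) (b : B) (ra : Coalgebra.Repr k a ια)
    (rb : Coalgebra.Repr k b ιβ) :
    ∑ i ∈ ra.index, ∑ j ∈ rb.index,
        ((Coalgebra.counit : A →ₗ[k] k) (ra.left i) *
          (Coalgebra.counit : B →ₗ[k] k) (rb.right j)) • τ (ra.right i ⊗ₜ[k] rb.left j)
      = τ (a ⊗ₜ[k] b) := by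
  have h : ∀ i j, ((Coalgebra.counit : A →ₗ[k] k) (ra.left i) *
          (Coalgebra.counit : B →ₗ[k] k) (rb.right j)) • τ (ra.right i ⊗ₜ[k] rb.left j)
      = τ (((Coalgebra.counit : A →ₗ[k] k) (ra.left i) • ra.right i) ⊗ₜ[k]
          ((Coalgebra.counit : B →ₗ[k] k) (rb.right j) • rb.left j)) := by
    intro i j
    rw [← map_smul, mul_smul, ← TensorProduct.tmul_smul, TensorProduct.smul_tmul']
  rw [Finset.sum_congr rfl fun i _ => Finset.sum_congr rfl fun j _ => h i j]
  simp only [← map_sum, ← TensorProduct.tmul_sum, ← TensorProduct.sum_tmul]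
  rw [repr_counit_smul_right, repr_counit_smul_left]

lemma F_smashComul (x : A ⊗[k] B) :
    TensorProduct.map (piB k A B) (piA k A B) (smashComul k A B τ x) = τ x := by
  induction x using TensorProduct.induction_on with
  | zero => simp
  | add u v hu hv => simp only [map_add, hu, hv]
  | tmul a b =>
      rw [smashComul_tmul k A B τ a b (Coalgebra.Repr.arbitrary k a)
        (Coalgebra.Repr.arbitrary k b)]
      simp only [map_sum, F_term]
      exact sum_smul_tau k A B τ a b _ _

lemma comul_one_B (hsb : IsSmashBiproduct k A B σ τ) :
    (Coalgebra.comul : B →ₗ[k] B ⊗[k] B) (1:B)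
      = (Coalgebra.counit : A →ₗ[k] k) (1:A) • ((1:B) ⊗ₜ[k] (1:B)) := by
  set rA := Coalgebra.Repr.arbitrary k (1:A) with hrA
  set rB := Coalgebra.Repr.arbitrary k (1:B) with hrB
  have hG : ∀ (x : A) (d : B) (t : B ⊗[k] A),
      TensorProduct.map (piB k A B) (piB k A B)
          (TensorProduct.map (TensorProduct.mk k A B x)
            ((TensorProduct.mk k A B).flip d) t)
        = (Coalgebra.counit : A →ₗ[k] k) x •
            (((TensorProduct.rid k B) ((LinearMap.lTensor B
              (Coalgebra.counit : A →ₗ[k] k)) t)) ⊗ₜ[k] d) := by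
    intro x d t
    induction t using TensorProduct.induction_on with
    | zero => simp
    | tmul β α =>
        simp only [TensorProduct.map_tmul, TensorProduct.mk_apply, LinearMap.flip_apply,
          piB_tmul, LinearMap.lTensor_tmul, TensorProduct.rid_tmul,
          TensorProduct.smul_tmul', TensorProduct.tmul_smul, smul_smul, mul_comm]
    | add s s' hs hs' => simp only [map_add, smul_add, hs, hs', TensorProduct.add_tmul]
  have key := congrArg (TensorProduct.map (piB k A B) (piB k A B)) hsb.comul_one
  rw [smashComul_tmul k A B τ (1:A) (1:B) rA rB] at key
  simp only [map_sum, hG, TensorProduct.map_tmul, piB_tmul] at key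
  simp only [hsb.tau_counit_right] at key
  have h1 : ∀ i j, (Coalgebra.counit : A →ₗ[k] k) (rA.left i) •
        (((Coalgebra.counit : A →ₗ[k] k) (rA.right i) • rB.left j) ⊗ₜ[k] rB.right j)
      = ((Coalgebra.counit : A →ₗ[k] k) (rA.left i) *
          (Coalgebra.counit : A →ₗ[k] k) (rA.right i)) • (rB.left j ⊗ₜ[k] rB.right j) := by
    intro i j; rw [← TensorProduct.smul_tmul', smul_smul]
  rw [Finset.sum_congr rfl fun i _ => Finset.sum_congr rfl fun j _ => h1 i j] at key
  have h2 : ∀ i ∈ rA.index, ∑ j ∈ rB.index, ((Coalgebra.counit : A →ₗ[k] k) (rA.left i) *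
          (Coalgebra.counit : A →ₗ[k] k) (rA.right i)) • (rB.left j ⊗ₜ[k] rB.right j)
      = ((Coalgebra.counit : A →ₗ[k] k) (rA.left i) *
          (Coalgebra.counit : A →ₗ[k] k) (rA.right i)) •
          (Coalgebra.comul : B →ₗ[k] B ⊗[k] B) (1:B) := by
    intro i _; rw [← Finset.smul_sum, rB.eq]
  rw [Finset.sum_congr rfl h2, ← Finset.sum_smul] at key
  have hs : ∑ i ∈ rA.index, (Coalgebra.counit : A →ₗ[k] k) (rA.left i) *
      (Coalgebra.counit : A →ₗ[k] k) (rA.right i) = (Coalgebra.counit : A →ₗ[k] k) (1:A) := by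
    have := congrArg (Coalgebra.counit : A →ₗ[k] k) (repr_counit_smul_right k A rA)
    simpa [map_sum, smul_eq_mul] using this
  rw [hs] at key
  have hR : ((Coalgebra.counit : A →ₗ[k] k) (1:A) • (1:B)) ⊗ₜ[k]
        ((Coalgebra.counit : A →ₗ[k] k) (1:A) • (1:B))
      = (Coalgebra.counit : A →ₗ[k] k) (1:A) •
        ((Coalgebra.counit : A →ₗ[k] k) (1:A) • ((1:B) ⊗ₜ[k] (1:B))) := by
    simp [TensorProduct.smul_tmul', TensorProduct.tmul_smul]
  rw [hR] at key
  exact smul_right_injective _ (counitA_one_ne_zero k A B σ τ hsb) key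

lemma piB_smashMul (hsb : IsSmashBiproduct k A B σ τ) (hrc : RightConormal k A B σ)
    (a a' : A) (b b' : B) :
    piB k A B (smashMul k A B σ ((a ⊗ₜ[k] b) ⊗ₜ[k] (a' ⊗ₜ[k] b')))
      = ((Coalgebra.counit : B →ₗ[k] k) (1:B) *
          ((Coalgebra.counit : A →ₗ[k] k) a * (Coalgebra.counit : A →ₗ[k] k) a')) •
          (b * b') := by
  rw [smashMul_tmul]
  have h : ∀ t : A ⊗[k] B,
      piB k A B (TensorProduct.map (LinearMap.mulLeft k a) (LinearMap.mulRight k b') t)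
        = ((Coalgebra.counit : B →ₗ[k] k) (1:B) * (Coalgebra.counit : A →ₗ[k] k) a) •
            LinearMap.mulRight k b'
              ((TensorProduct.lid k B)
                ((LinearMap.rTensor B (Coalgebra.counit : A →ₗ[k] k)) t)) := by
    intro t
    induction t using TensorProduct.induction_on with
    | zero => simp
    | tmul α β =>
        simp only [TensorProduct.map_tmul, LinearMap.mulLeft_apply, LinearMap.mulRight_apply,
          piB_tmul, LinearMap.rTensor_tmul, TensorProduct.lid_tmul, map_smul,
          LinearMap.mulRight_apply, counitA_mul k A B σ τ hsb a α, smul_smul]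
        ring_nf
    | add s s' hs hs' => simp only [map_add, smul_add, hs, hs']
  rw [h, hrc b a', map_smul, smul_smul, LinearMap.mulRight_apply]
  ring_nf

/-- Componentwise multiplication on `B ⊗ A`. -/
def mulBA : (B ⊗[k] A) ⊗[k] (B ⊗[k] A) →ₗ[k] B ⊗[k] A :=
  (TensorProduct.map (LinearMap.mul' k B) (LinearMap.mul' k A)) ∘ₗ
    (TensorProduct.tensorTensorTensorComm k B A B A).toLinearMap

lemma mulBA_tmul (β₁ β₂ : B) (α₁ α₂ : A) :
    mulBA k A B ((β₁ ⊗ₜ[k] α₁) ⊗ₜ[k] (β₂ ⊗ₜ[k] α₂)) = (β₁ * β₂) ⊗ₜ[k] (α₁ * α₂) := by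
  simp [mulBA, TensorProduct.tensorTensorTensorComm_tmul, LinearMap.mul'_apply]

/-- The key summand computation. -/
lemma F_mul2_term (hsb : IsSmashBiproduct k A B σ τ) (hrc : RightConormal k A B σ)
    (c c' : A) (β : B) (t s : B ⊗[k] A) :
    TensorProduct.map (piB k A B) (piA k A B)
        (mul2 k (A ⊗[k] B) (smashMul k A B σ)
          ((TensorProduct.map (TensorProduct.mk k A B c)
              ((TensorProduct.mk k A B).flip (1:B)) t) ⊗ₜ[k]
           (TensorProduct.map (TensorProduct.mk k A B c')
              ((TensorProduct.mk k A B).flip β) s)))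
      = ((Coalgebra.counit : B →ₗ[k] k) (1:B) *
          (Coalgebra.counit : A →ₗ[k] k) c * (Coalgebra.counit : A →ₗ[k] k) c' *
          (Coalgebra.counit : B →ₗ[k] k) β) • mulBA k A B (t ⊗ₜ[k] s) := by
  induction t using TensorProduct.induction_on with
  | zero => simp [TensorProduct.zero_tmul]
  | add u v hu hv =>
      simp only [map_add, TensorProduct.add_tmul, smul_add, hu, hv]
  | tmul β₁ α₁ =>
      induction s using TensorProduct.induction_on with
      | zero => simp [TensorProduct.tmul_zero]
      | add u v hu hv =>
          simp only [map_add, TensorProduct.tmul_add, smul_add, hu, hv]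
      | tmul β₂ α₂ =>
          simp only [TensorProduct.map_tmul, TensorProduct.mk_apply, LinearMap.flip_apply,
            mul2, LinearMap.coe_comp, Function.comp_apply, LinearEquiv.coe_coe,
            TensorProduct.tensorTensorTensorComm_tmul]
          rw [smashMul_one_left k A B σ τ hsb]
          rw [piA_tmul, piB_smashMul k A B σ τ hsb hrc c c' β₁ β₂, mulBA_tmul]
          rw [TensorProduct.smul_tmul', TensorProduct.tmul_smul, TensorProduct.smul_tmul',
            smul_smul]
          ring_nf

lemma F_mul2_smashComul (hsb : IsSmashBiproduct k A B σ τ) (hrc : RightConormal k A B σ)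
    (a a' : A) (b : B) :
    TensorProduct.map (piB k A B) (piA k A B)
        (mul2 k (A ⊗[k] B) (smashMul k A B σ)
          (smashComul k A B τ (a ⊗ₜ[k] (1:B)) ⊗ₜ[k] smashComul k A B τ (a' ⊗ₜ[k] b)))
      = mulBA k A B (τ (a ⊗ₜ[k] (1:B)) ⊗ₜ[k] τ (a' ⊗ₜ[k] b)) := by
  have ra := Coalgebra.Repr.arbitrary k a
  have ra' := Coalgebra.Repr.arbitrary k a'
  have rb := Coalgebra.Repr.arbitrary k b
  let r1 : Coalgebra.Repr k (1:B) Unit :=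
    { index := (Finset.univ : Finset Unit),
      left := fun _ => (Coalgebra.counit : A →ₗ[k] k) (1:A) • (1:B),
      right := fun _ => (1:B),
      eq := by
        simp [comul_one_B k A B σ τ hsb, TensorProduct.smul_tmul'] }
  have hl : ∀ u, r1.left u = (Coalgebra.counit : A →ₗ[k] k) (1:A) • (1:B) := fun _ => rfl
  have hr : ∀ u, r1.right u = (1:B) := fun _ => rfl
  have hidx : r1.index = (Finset.univ : Finset Unit) := rfl
  rw [smashComul_tmul k A B τ a (1:B) ra r1, smashComul_tmul k A B τ a' b ra' rb]
  simp only [hl, hr, hidx]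
  simp only [Finset.univ_unique, Finset.sum_singleton]
  simp only [TensorProduct.sum_tmul, TensorProduct.tmul_sum, map_sum]
  simp only [TensorProduct.tmul_smul, map_smul, ← TensorProduct.smul_tmul']
  simp only [F_mul2_term k A B σ τ hsb hrc]
  have hterm : ∀ (i : ra.ι) (j : ra'.ι) (l : rb.ι),
      (Coalgebra.counit : A →ₗ[k] k) (1:A) •
        (((Coalgebra.counit : B →ₗ[k] k) (1:B) *
          (Coalgebra.counit : A →ₗ[k] k) (ra.left i) *
          (Coalgebra.counit : A →ₗ[k] k) (ra'.left j) *
          (Coalgebra.counit : B →ₗ[k] k) (rb.right l)) •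
          mulBA k A B (τ (ra.right i ⊗ₜ[k] (1:B)) ⊗ₜ[k] τ (ra'.right j ⊗ₜ[k] rb.left l)))
      = mulBA k A B
          (((Coalgebra.counit : A →ₗ[k] k) (ra.left i) • τ (ra.right i ⊗ₜ[k] (1:B))) ⊗ₜ[k]
            (((Coalgebra.counit : A →ₗ[k] k) (ra'.left j) *
              (Coalgebra.counit : B →ₗ[k] k) (rb.right l)) •
              τ (ra'.right j ⊗ₜ[k] rb.left l))) := by
    intro i j l
    rw [smul_smul, ← TensorProduct.smul_tmul', TensorProduct.tmul_smul, map_smul, map_smul,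
      smul_smul]
    congr 1
    linear_combination ((Coalgebra.counit : A →ₗ[k] k) (ra.left i) *
      (Coalgebra.counit : A →ₗ[k] k) (ra'.left j) *
      (Coalgebra.counit : B →ₗ[k] k) (rb.right l)) * counit_one_mul k A B σ τ hsb
  rw [Finset.sum_congr rfl fun j _ => Finset.sum_congr rfl fun l _ =>
    Finset.sum_congr rfl fun i _ => hterm i j l]
  simp only [← map_sum, ← TensorProduct.tmul_sum, ← TensorProduct.sum_tmul]
  rw [sum_smul_tau_one k A B τ a ra (1:B), sum_smul_tau k A B τ a' b ra' rb]

/-- Identity (B8.1): if `σ` is right conormal then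
`Σ b_τ ⊗ (aa')_τ = Σ 1_{Bτ₁}b_{τ₂} ⊗ a_{τ₁}a'_{τ₂}`. -/
theorem stmt8 (hsb : IsSmashBiproduct k A B σ τ)
    (hrc : RightConormal k A B σ)
    (a a' : A) (b : B)
    (ι₁ ι₂ : Type) [Fintype ι₁] [Fintype ι₂]
    (bt : ι₁ → B) (at' : ι₁ → A)
    (hτ1 : τ (a ⊗ₜ[k] (1:B)) = ∑ t : ι₁, bt t ⊗ₜ[k] at' t)
    (bu : ι₂ → B) (au : ι₂ → A)
    (hτ2 : τ (a' ⊗ₜ[k] b) = ∑ u : ι₂, bu u ⊗ₜ[k] au u) :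
    τ ((a * a') ⊗ₜ[k] b) = ∑ t : ι₁, ∑ u : ι₂, (bt t * bu u) ⊗ₜ[k] (at' t * au u) := by
  have key := congrArg (TensorProduct.map (piB k A B) (piA k A B))
    (hsb.comul_mul (a ⊗ₜ[k] (1:B)) (a' ⊗ₜ[k] b))
  rw [smashMul_one_left k A B σ τ hsb, F_smashComul k A B τ,
    F_mul2_smashComul k A B σ τ hsb hrc] at key
  rw [key, hτ1, hτ2, TensorProduct.sum_tmul]
  simp only [TensorProduct.tmul_sum, map_sum, mulBA_tmul]

end
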